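/- arXiv:2310.03988 — 4 statements merged into one kernel-verified Lean document; each statement's English description precedes it below -/
import Mathlib

section
/- For the Erdős–Rényi random graph $G(n,p)$ with adjacency matrix $A$, the hyper-Zagreb index $\mathcal{I}_n=\sum_{i<j} A_{ij}(d_i+d_j)^2$ (where $d_i=\sum_{k\ne i}A_{ik}$) has expectation $\mathbb{E}[\mathcal{I}_n]=n(n-1)(n-2)(2n-5)p^3+5n(n-1)(n-2)p^2+2n(n-1)p$. -/
open MeasureTheory ProbabilityTheory

def edgeHZ {n : ℕ} (a b : Fin n) (h : a ≠ b) : {e : Fin n × Fin n // e.1 < e.2} :=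
  if hab : a < b then ⟨(a, b), hab⟩ else ⟨(b, a), lt_of_le_of_ne (not_lt.mp hab) h.symm⟩

lemma edgeHZ_ne {n : ℕ} {a b c d : Fin n} (hab : a ≠ b) (hcd : c ≠ d)
    (h1 : a ≠ c ∨ b ≠ d) (h2 : a ≠ d ∨ b ≠ c) : edgeHZ a b hab ≠ edgeHZ c d hcd := by
  unfold edgeHZ
  split_ifs <;> (intro H; simp only [Subtype.mk.injEq, Prod.mk.injEq] at H; tauto)

lemma edgeHZ_eval {n : ℕ} {Ω : Type*} (A : Fin n → Fin n → Ω → ℝ)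
    (hAsymm : ∀ i j, A i j = A j i) (a b : Fin n) (h : a ≠ b) :
    A (edgeHZ a b h).1.1 (edgeHZ a b h).1.2 = A a b := by
  unfold edgeHZ
  split_ifs with h'
  · rfl
  · exact (hAsymm a b).symm

theorem stmt7 {Ω : Type*} [MeasureSpace Ω] [IsProbabilityMeasure (ℙ : Measure Ω)]
    (n : ℕ) (p : ℝ) (hp : p ∈ Set.Icc (0:ℝ) 1)
    (A : Fin n → Fin n → Ω → ℝ)
    (hAsymm : ∀ i j, A i j = A j i) (hdiag : ∀ i ω, A i i ω = 0)
    (hmeas : ∀ i j, Measurable (A i j))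
    (h01 : ∀ i j, i < j → ∀ ω, A i j ω = 0 ∨ A i j ω = 1)
    (hber : ∀ i j, i < j → ℙ {ω | A i j ω = 1} = ENNReal.ofReal p)
    (hindep : iIndepFun
      (fun e : {e : Fin n × Fin n // e.1 < e.2} => A e.1.1 e.1.2) ℙ) :
    let d : Fin n → Ω → ℝ := fun i ω => ∑ k, if k ≠ i then A i k ω else 0
    (∫ ω, (∑ i, ∑ j, if i < j then A i j ω * (d i ω + d j ω)^2 else 0) ∂ℙ)
      = (n:ℝ) * ((n:ℝ)-1) * ((n:ℝ)-2) * (2*(n:ℝ)-5) * p^3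
        + 5 * (n:ℝ) * ((n:ℝ)-1) * ((n:ℝ)-2) * p^2 + 2 * (n:ℝ) * ((n:ℝ)-1) * p := by
  intro d
  have hd : ∀ (a : Fin n) (ω : Ω), d a ω = ∑ k, if k ≠ a then A a k ω else 0 :=
    fun _ _ => rfl
  -- 0/1 values for all pairs
  have hval : ∀ a b : Fin n, ∀ ω, A a b ω = 0 ∨ A a b ω = 1 := by
    intro a b ω
    rcases eq_or_ne a b with h | h
    · left; rw [h, hdiag]
    · rcases h.lt_or_gt with h' | h'
      · exact h01 a b h' ω
      · rw [hAsymm a b]; exact h01 b a h' ω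
  have hsm : ∀ a b : Fin n, MeasurableSet {ω | A a b ω = 1} :=
    fun a b => hmeas a b (measurableSet_singleton 1)
  have hrepr : ∀ a b : Fin n, A a b = Set.indicator {ω | A a b ω = 1} (fun _ => (1:ℝ)) := by
    intro a b
    funext ω
    rcases hval a b ω with h | h
    · rw [h, Set.indicator_of_notMem]
      simp only [Set.mem_setOf_eq, h]
      norm_num
    · rw [h, Set.indicator_of_mem]
      exact h
  have hsq : ∀ a b : Fin n, ∀ ω, A a b ω * A a b ω = A a b ω := by
    intro a b ω; rcases hval a b ω with h | h <;> rw [h] <;> ring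
  have hInt1 : ∀ a b : Fin n, Integrable (A a b) ℙ := by
    intro a b
    rw [hrepr a b]
    exact (integrable_const (1:ℝ)).indicator (hsm a b)
  have hInt2 : ∀ a b c e : Fin n, Integrable (fun ω => A a b ω * A c e ω) ℙ := by
    intro a b c e
    refine Integrable.mono' (integrable_const (1:ℝ))
      ((hmeas a b).mul (hmeas c e)).aestronglyMeasurable (ae_of_all _ fun ω => ?_)
    rcases hval a b ω with h1 | h1 <;> rcases hval c e ω with h2 | h2 <;>
      rw [h1, h2] <;> norm_num
  have hInt3 : ∀ a b c e f g : Fin n, Integrable (fun ω => A a b ω * A c e ω * A f g ω) ℙ := by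
    intro a b c e f g
    refine Integrable.mono' (integrable_const (1:ℝ))
      (((hmeas a b).mul (hmeas c e)).mul (hmeas f g)).aestronglyMeasurable
      (ae_of_all _ fun ω => ?_)
    rcases hval a b ω with h1 | h1 <;> rcases hval c e ω with h2 | h2 <;>
      rcases hval f g ω with h3 | h3 <;> rw [h1, h2, h3] <;> norm_num
  have hE1o : ∀ a b : Fin n, a < b → ∫ ω, A a b ω ∂ℙ = p := by
    intro a b h
    rw [hrepr a b, integral_indicator_const (1:ℝ) (hsm a b), measureReal_def, hber a b h,
      ENNReal.toReal_ofReal hp.1, smul_eq_mul, mul_one]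
  have hE1 : ∀ a b : Fin n, a ≠ b → ∫ ω, A a b ω ∂ℙ = p := by
    intro a b h
    rcases h.lt_or_gt with h' | h'
    · exact hE1o a b h'
    · rw [hAsymm a b]; exact hE1o b a h'
  have hE2 : ∀ e1 e2 : {e : Fin n × Fin n // e.1 < e.2}, e1 ≠ e2 →
      ∫ ω, A e1.1.1 e1.1.2 ω * A e2.1.1 e2.1.2 ω ∂ℙ = p^2 := by
    intro e1 e2 h
    have h' := (hindep.indepFun h).integral_mul_eq_mul_integral
      (hmeas _ _).aestronglyMeasurable (hmeas _ _).aestronglyMeasurable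
    show integral ℙ (A e1.1.1 e1.1.2 * A e2.1.1 e2.1.2) = p ^ 2
    rw [h', hE1 _ _ (ne_of_lt e1.2), hE1 _ _ (ne_of_lt e2.2), sq]
  have hE3 : ∀ e1 e2 e3 : {e : Fin n × Fin n // e.1 < e.2}, e1 ≠ e2 → e1 ≠ e3 → e2 ≠ e3 →
      ∫ ω, A e1.1.1 e1.1.2 ω * A e2.1.1 e2.1.2 ω * A e3.1.1 e3.1.2 ω ∂ℙ = p^3 := by
    intro e1 e2 e3 h12 h13 h23
    have hprod : IndepFun (A e1.1.1 e1.1.2 * A e2.1.1 e2.1.2) (A e3.1.1 e3.1.2) ℙ := by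
      have h' := hindep.indepFun_finsetProd_of_notMem (fun e => hmeas _ _)
        (s := {e1, e2}) (i := e3) (by simp [Ne.symm h13, Ne.symm h23])
      rwa [Finset.prod_pair h12] at h'
    have h' := hprod.integral_mul_eq_mul_integral
      (((hmeas _ _).mul (hmeas _ _)).aestronglyMeasurable) (hmeas _ _).aestronglyMeasurable
    show integral ℙ (A e1.1.1 e1.1.2 * A e2.1.1 e2.1.2 * A e3.1.1 e3.1.2) = p ^ 3
    rw [h', show integral ℙ (A e1.1.1 e1.1.2 * A e2.1.1 e2.1.2)
        = ∫ ω, A e1.1.1 e1.1.2 ω * A e2.1.1 e2.1.2 ω ∂ℙ from rfl,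
      hE2 e1 e2 h12, hE1 _ _ (ne_of_lt e3.2)]
    ring
  have hP2 : ∀ a b c e : Fin n, a ≠ b → c ≠ e → (a ≠ c ∨ b ≠ e) → (a ≠ e ∨ b ≠ c) →
      ∫ ω, A a b ω * A c e ω ∂ℙ = p^2 := by
    intro a b c e hab hce h1 h2
    have h' := hE2 (edgeHZ a b hab) (edgeHZ c e hce) (edgeHZ_ne hab hce h1 h2)
    rwa [edgeHZ_eval A hAsymm, edgeHZ_eval A hAsymm] at h'
  have hP3 : ∀ a b c e f g : Fin n, a ≠ b → c ≠ e → f ≠ g →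
      (a ≠ c ∨ b ≠ e) → (a ≠ e ∨ b ≠ c) → (a ≠ f ∨ b ≠ g) → (a ≠ g ∨ b ≠ f) →
      (c ≠ f ∨ e ≠ g) → (c ≠ g ∨ e ≠ f) →
      ∫ ω, A a b ω * A c e ω * A f g ω ∂ℙ = p^3 := by
    intro a b c e f g hab hce hfg h1 h2 h3 h4 h5 h6
    have h' := hE3 (edgeHZ a b hab) (edgeHZ c e hce) (edgeHZ f g hfg)
      (edgeHZ_ne hab hce h1 h2) (edgeHZ_ne hab hfg h3 h4) (edgeHZ_ne hce hfg h5 h6)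
    rwa [edgeHZ_eval A hAsymm, edgeHZ_eval A hAsymm, edgeHZ_eval A hAsymm] at h'
  -- the per-pair computation
  have main : ∀ i j : Fin n, i < j →
      Integrable (fun ω => A i j ω * (d i ω + d j ω)^2) ℙ ∧
      ∫ ω, A i j ω * (d i ω + d j ω)^2 ∂ℙ
        = 4*p + 10*((n:ℝ)-2)*p^2 + 2*((n:ℝ)-2)*(2*(n:ℝ)-5)*p^3 := by
    intro i j hij
    have hijne : i ≠ j := ne_of_lt hij
    set u : Finset (Fin n) := Finset.univ \ {i, j} with hu
    have hmemu : ∀ k, k ∈ u → k ≠ i ∧ k ≠ j := by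
      intro k hk
      rw [hu, Finset.mem_sdiff] at hk
      have := hk.2
      simp only [Finset.mem_insert, Finset.mem_singleton] at this
      tauto
    have h2n : 2 ≤ n := by
      have h1 := j.isLt
      have h2 : (i : ℕ) < (j : ℕ) := hij
      omega
    have hcard : (u.card : ℝ) = (n : ℝ) - 2 := by
      have hc : u.card = n - 2 := by
        rw [hu, Finset.card_sdiff_of_subset (Finset.subset_univ _), Finset.card_univ,
          Fintype.card_fin, Finset.card_pair hijne]
      rw [hc, Nat.cast_sub h2n]
      norm_num
    have hdd : ∀ ω, d i ω + d j ω = 2 * A i j ω + ∑ k ∈ u, (A i k ω + A j k ω) := by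
      intro ω
      have hdi : ∀ a : Fin n, d a ω = ∑ k, A a k ω := by
        intro a
        rw [hd]
        refine Finset.sum_congr rfl fun k _ => ?_
        rcases eq_or_ne k a with h | h
        · subst h; simp [hdiag]
        · simp [h]
      rw [hdi i, hdi j, ← Finset.sum_add_distrib,
        ← Finset.sum_sdiff (Finset.subset_univ ({i, j} : Finset (Fin n))), ← hu,
        Finset.sum_pair hijne, hdiag i ω, hdiag j ω, hAsymm j i]
      ring
    have key : ∀ ω, A i j ω * (d i ω + d j ω)^2
        = 4 * A i j ω
          + (∑ k ∈ u, (4 * (A i j ω * A i k ω) + 4 * (A i j ω * A j k ω)))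
          + ∑ k ∈ u, ∑ l ∈ u, (A i j ω * A i k ω * A i l ω + A i j ω * A i k ω * A j l ω
              + (A i j ω * A j k ω * A i l ω + A i j ω * A j k ω * A j l ω)) := by
      intro ω
      rw [hdd ω]
      rcases h01 i j hij ω with h | h
      · rw [h]; simp
      · rw [h]
        have e2 : ∑ k ∈ u, (4 * ((1:ℝ) * A i k ω) + 4 * (1 * A j k ω))
            = 4 * ∑ k ∈ u, (A i k ω + A j k ω) := by
          rw [Finset.mul_sum]
          exact Finset.sum_congr rfl fun k _ => by ring
        have e3 : ∑ k ∈ u, ∑ l ∈ u, ((1:ℝ) * A i k ω * A i l ω + 1 * A i k ω * A j l ω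
              + (1 * A j k ω * A i l ω + 1 * A j k ω * A j l ω))
            = (∑ k ∈ u, (A i k ω + A j k ω)) * (∑ k ∈ u, (A i k ω + A j k ω)) := by
          rw [Finset.sum_mul_sum]
          exact Finset.sum_congr rfl fun k _ => Finset.sum_congr rfl fun l _ => by ring
        rw [e2, e3]
        ring
    have Ia : Integrable (fun ω => 4 * A i j ω) ℙ := (hInt1 i j).const_mul 4
    have IbTerm : ∀ k : Fin n, Integrable (fun ω => 4 * (A i j ω * A i k ω)
        + 4 * (A i j ω * A j k ω)) ℙ :=
      fun k => ((hInt2 i j i k).const_mul 4).add ((hInt2 i j j k).const_mul 4)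
    have Ib : Integrable (fun ω => ∑ k ∈ u, (4 * (A i j ω * A i k ω)
        + 4 * (A i j ω * A j k ω))) ℙ :=
      integrable_finset_sum _ fun k _ => IbTerm k
    have IcL : ∀ k l : Fin n, Integrable (fun ω => A i j ω * A i k ω * A i l ω
        + A i j ω * A i k ω * A j l ω) ℙ :=
      fun k l => (hInt3 i j i k i l).add (hInt3 i j i k j l)
    have IcR : ∀ k l : Fin n, Integrable (fun ω => A i j ω * A j k ω * A i l ω
        + A i j ω * A j k ω * A j l ω) ℙ :=
      fun k l => (hInt3 i j j k i l).add (hInt3 i j j k j l)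
    have IcTerm : ∀ k l : Fin n, Integrable (fun ω => A i j ω * A i k ω * A i l ω
        + A i j ω * A i k ω * A j l ω
        + (A i j ω * A j k ω * A i l ω + A i j ω * A j k ω * A j l ω)) ℙ :=
      fun k l => (IcL k l).add (IcR k l)
    have Ic : Integrable (fun ω => ∑ k ∈ u, ∑ l ∈ u, (A i j ω * A i k ω * A i l ω
        + A i j ω * A i k ω * A j l ω
        + (A i j ω * A j k ω * A i l ω + A i j ω * A j k ω * A j l ω))) ℙ :=
      integrable_finset_sum _ fun k _ => integrable_finset_sum _ fun l _ => IcTerm k l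
    have Iab : Integrable (fun ω => 4 * A i j ω + ∑ k ∈ u, (4 * (A i j ω * A i k ω)
        + 4 * (A i j ω * A j k ω))) ℙ := Ia.add Ib
    have hfun : (fun ω => A i j ω * (d i ω + d j ω)^2)
        = (fun ω => 4 * A i j ω
          + (∑ k ∈ u, (4 * (A i j ω * A i k ω) + 4 * (A i j ω * A j k ω)))
          + ∑ k ∈ u, ∑ l ∈ u, (A i j ω * A i k ω * A i l ω + A i j ω * A i k ω * A j l ω
              + (A i j ω * A j k ω * A i l ω + A i j ω * A j k ω * A j l ω))) := funext key
    constructor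
    · rw [hfun]; exact Iab.add Ic
    · rw [hfun]
      rw [integral_add Iab Ic, integral_add Ia Ib]
      have EA : ∫ ω, 4 * A i j ω ∂ℙ = 4 * p := by
        rw [integral_const_mul, hE1 i j hijne]
      have hB : ∀ k ∈ u, (∫ ω, (4 * (A i j ω * A i k ω) + 4 * (A i j ω * A j k ω)) ∂ℙ)
          = 8 * p^2 := by
        intro k hk
        obtain ⟨hki, hkj⟩ := hmemu k hk
        rw [integral_add ((hInt2 i j i k).const_mul 4) ((hInt2 i j j k).const_mul 4),
          integral_const_mul, integral_const_mul,
          hP2 i j i k hijne (Ne.symm hki) (Or.inr (Ne.symm hkj)) (Or.inl (Ne.symm hki)),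
          hP2 i j j k hijne (Ne.symm hkj) (Or.inl hijne) (Or.inl (Ne.symm hki))]
        ring
      have EB : ∫ ω, (∑ k ∈ u, (4 * (A i j ω * A i k ω) + 4 * (A i j ω * A j k ω))) ∂ℙ
          = (u.card : ℝ) * (8 * p^2) := by
        rw [integral_finset_sum _ fun k _ => IbTerm k,
          Finset.sum_congr rfl hB, Finset.sum_const, nsmul_eq_mul]
      have hC : ∀ k ∈ u, ∀ l ∈ u, (∫ ω, (A i j ω * A i k ω * A i l ω
            + A i j ω * A i k ω * A j l ω
            + (A i j ω * A j k ω * A i l ω + A i j ω * A j k ω * A j l ω)) ∂ℙ)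
          = if k = l then 2*p^2 + 2*p^3 else 4*p^3 := by
        intro k hk l hl
        obtain ⟨hki, hkj⟩ := hmemu k hk
        obtain ⟨hli, hlj⟩ := hmemu l hl
        rw [integral_add (IcL k l) (IcR k l),
          integral_add (hInt3 i j i k i l) (hInt3 i j i k j l),
          integral_add (hInt3 i j j k i l) (hInt3 i j j k j l)]
        have ht2 : ∫ ω, A i j ω * A i k ω * A j l ω ∂ℙ = p^3 :=
          hP3 i j i k j l hijne (Ne.symm hki) (Ne.symm hlj)
            (Or.inr (Ne.symm hkj)) (Or.inl (Ne.symm hki))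
            (Or.inl hijne) (Or.inl (Ne.symm hli))
            (Or.inl hijne) (Or.inl (Ne.symm hli))
        have ht3 : ∫ ω, A i j ω * A j k ω * A i l ω ∂ℙ = p^3 :=
          hP3 i j j k i l hijne (Ne.symm hkj) (Ne.symm hli)
            (Or.inl hijne) (Or.inl (Ne.symm hki))
            (Or.inr (Ne.symm hlj)) (Or.inl (Ne.symm hli))
            (Or.inl (Ne.symm hijne)) (Or.inl (Ne.symm hlj))
        rcases eq_or_ne k l with hkl | hkl
        · subst hkl
          have h1 : (fun ω => A i j ω * A i k ω * A i k ω) = fun ω => A i j ω * A i k ω :=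
            funext fun ω => by rw [mul_assoc, hsq i k ω]
          have h4 : (fun ω => A i j ω * A j k ω * A j k ω) = fun ω => A i j ω * A j k ω :=
            funext fun ω => by rw [mul_assoc, hsq j k ω]
          rw [show (∫ ω, A i j ω * A i k ω * A i k ω ∂ℙ)
              = ∫ ω, A i j ω * A i k ω ∂ℙ from by rw [h1],
            show (∫ ω, A i j ω * A j k ω * A j k ω ∂ℙ)
              = ∫ ω, A i j ω * A j k ω ∂ℙ from by rw [h4],
            hP2 i j i k hijne (Ne.symm hki) (Or.inr (Ne.symm hkj)) (Or.inl (Ne.symm hki)),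
            hP2 i j j k hijne (Ne.symm hkj) (Or.inl hijne) (Or.inl (Ne.symm hki)),
            ht2, ht3, if_pos rfl]
          ring
        · have ht1 : ∫ ω, A i j ω * A i k ω * A i l ω ∂ℙ = p^3 :=
            hP3 i j i k i l hijne (Ne.symm hki) (Ne.symm hli)
              (Or.inr (Ne.symm hkj)) (Or.inl (Ne.symm hki))
              (Or.inr (Ne.symm hlj)) (Or.inl (Ne.symm hli))
              (Or.inr hkl) (Or.inl (Ne.symm hli))
          have ht4 : ∫ ω, A i j ω * A j k ω * A j l ω ∂ℙ = p^3 :=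
            hP3 i j j k j l hijne (Ne.symm hkj) (Ne.symm hlj)
              (Or.inl hijne) (Or.inl (Ne.symm hki))
              (Or.inl hijne) (Or.inl (Ne.symm hli))
              (Or.inr hkl) (Or.inl (Ne.symm hlj))
          rw [ht1, ht2, ht3, ht4, if_neg hkl]
          ring
      have EC : ∫ ω, (∑ k ∈ u, ∑ l ∈ u, (A i j ω * A i k ω * A i l ω
            + A i j ω * A i k ω * A j l ω
            + (A i j ω * A j k ω * A i l ω + A i j ω * A j k ω * A j l ω))) ∂ℙ
          = (u.card : ℝ) * ((u.card : ℝ) * (4*p^3) + (2*p^2 + 2*p^3 - 4*p^3)) := by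
        rw [integral_finset_sum _ fun k _ =>
          integrable_finset_sum _ fun l _ => IcTerm k l]
        have hrow : ∀ k ∈ u, (∫ ω, (∑ l ∈ u, (A i j ω * A i k ω * A i l ω
              + A i j ω * A i k ω * A j l ω
              + (A i j ω * A j k ω * A i l ω + A i j ω * A j k ω * A j l ω))) ∂ℙ)
            = (u.card : ℝ) * (4*p^3) + (2*p^2 + 2*p^3 - 4*p^3) := by
          intro k hk
          rw [integral_finset_sum _ fun l _ => IcTerm k l,
            Finset.sum_congr rfl (fun l hl => hC k hk l hl)]
          have hsplit : ∀ l ∈ u, (if k = l then 2*p^2 + 2*p^3 else 4*p^3)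
              = 4*p^3 + (if k = l then 2*p^2 + 2*p^3 - 4*p^3 else 0) := by
            intro l _
            rcases eq_or_ne k l with h | h
            · rw [if_pos h, if_pos h]; ring
            · rw [if_neg h, if_neg h]; ring
          rw [Finset.sum_congr rfl hsplit, Finset.sum_add_distrib, Finset.sum_const,
            nsmul_eq_mul, Finset.sum_ite_eq u k, if_pos hk]
        rw [Finset.sum_congr rfl hrow, Finset.sum_const, nsmul_eq_mul]
      rw [EA, EB, EC, hcard]
      ring
  -- outer summation
  have hInteg : ∀ i j : Fin n,
      Integrable (fun ω => if i < j then A i j ω * (d i ω + d j ω)^2 else 0) ℙ := by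
    intro i j
    rcases lt_or_ge i j with h | h
    · simp only [h, if_true]
      exact (main i j h).1
    · simp only [not_lt.mpr h, if_false]
      exact integrable_const 0
  have hstep : ∀ i j : Fin n, (∫ ω, (if i < j then A i j ω * (d i ω + d j ω)^2 else 0) ∂ℙ)
      = if i < j then 4*p + 10*((n:ℝ)-2)*p^2 + 2*((n:ℝ)-2)*(2*(n:ℝ)-5)*p^3 else 0 := by
    intro i j
    rcases lt_or_ge i j with h | h
    · simp only [h, if_true]
      exact (main i j h).2
    · simp only [not_lt.mpr h, if_false, integral_zero]
  rw [integral_finset_sum _ fun i _ => integrable_finset_sum _ fun j _ => hInteg i j]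
  rw [Finset.sum_congr rfl fun i _ =>
    integral_finset_sum _ fun j _ => hInteg i j]
  rw [Finset.sum_congr rfl fun i _ => Finset.sum_congr rfl fun j _ => hstep i j]
  -- counting
  set Cv : ℝ := 4*p + 10*((n:ℝ)-2)*p^2 + 2*((n:ℝ)-2)*(2*(n:ℝ)-5)*p^3 with hCv
  set T : ℝ := ∑ i : Fin n, ∑ j : Fin n, (if i < j then Cv else 0) with hT
  have hswap : T = ∑ i : Fin n, ∑ j : Fin n, (if j < i then Cv else 0) := by
    rw [hT, Finset.sum_comm]
  have hTT : T + T = (n:ℝ) * ((n:ℝ) * Cv - Cv) := by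
    nth_rewrite 2 [hswap]
    rw [hT, ← Finset.sum_add_distrib]
    have h2 : ∀ i : Fin n, ((∑ j : Fin n, (if i < j then Cv else 0))
        + ∑ j : Fin n, (if j < i then Cv else 0)) = (n:ℝ) * Cv - Cv := by
      intro i
      rw [← Finset.sum_add_distrib]
      have h3 : ∀ j ∈ Finset.univ, ((if i < j then Cv else 0) + (if j < i then Cv else 0))
          = Cv - (if i = j then Cv else 0) := by
        intro j _
        rcases lt_trichotomy i j with h | h | h
        · rw [if_pos h, if_neg (lt_asymm h), if_neg h.ne]; ring
        · rw [if_neg (h ▸ lt_irrefl i), if_neg (h ▸ lt_irrefl i), if_pos h]; ring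
        · rw [if_neg (lt_asymm h), if_pos h, if_neg h.ne']; ring
      rw [Finset.sum_congr rfl h3, Finset.sum_sub_distrib, Finset.sum_const,
        Finset.sum_ite_eq Finset.univ i, if_pos (Finset.mem_univ i), Finset.card_univ,
        Fintype.card_fin, nsmul_eq_mul]
    rw [Finset.sum_congr rfl fun i _ => h2 i, Finset.sum_const, Finset.card_univ,
      Fintype.card_fin, nsmul_eq_mul]
  have hfin : (n:ℝ) * ((n:ℝ) * Cv - Cv)
      = 2 * ((n:ℝ) * ((n:ℝ)-1) * ((n:ℝ)-2) * (2*(n:ℝ)-5) * p^3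
        + 5 * (n:ℝ) * ((n:ℝ)-1) * ((n:ℝ)-2) * p^2 + 2 * (n:ℝ) * ((n:ℝ)-1) * p) := by
    rw [hCv]; ring
  show T = _
  linarith
end

section
/- For the Erdős–Rényi random graph $G(n,p)$ with adjacency matrix $A$ and degrees $d_i$, the forgotten topological index $\mathcal{I}_n=\sum_{i<j} A_{ij}(d_i^2+d_j^2)$ has expectation $\mathbb{E}[\mathcal{I}_n]=n(n-1)(n-2)(n-3)p^3+3n(n-1)(n-2)p^2+n(n-1)p$. -/
open MeasureTheory ProbabilityTheory

private lemma sum_ite1 {α : Type*} [DecidableEq α] (T : Finset α) {j : α} (hj : j ∈ T)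
    (a b : ℝ) : (∑ l ∈ T, if l = j then a else b) = a + ((T.card : ℝ) - 1) * b := by
  have h : ∀ l ∈ T, (if l = j then a else b) = b + (if l = j then a - b else 0) := by
    intro l _; by_cases h : l = j <;> simp [h]
  rw [Finset.sum_congr rfl h, Finset.sum_add_distrib, Finset.sum_const,
    Finset.sum_ite_eq' T j (fun _ => a - b), if_pos hj]
  ring

private lemma sum_ite2 {α : Type*} [DecidableEq α] (T : Finset α) {j k : α} (hj : j ∈ T)
    (hk : k ∈ T) (hjk : j ≠ k) (a b : ℝ) :
    (∑ l ∈ T, if l = j then a else if l = k then a else b)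
      = 2 * a + ((T.card : ℝ) - 2) * b := by
  have h : ∀ l ∈ T, (if l = j then a else if l = k then a else b)
      = b + ((if l = j then a - b else 0) + (if l = k then a - b else 0)) := by
    intro l _
    by_cases h1 : l = j
    · subst h1; simp [hjk]
    · by_cases h2 : l = k <;> simp [h1, h2, Ne.symm hjk]
  rw [Finset.sum_congr rfl h, Finset.sum_add_distrib, Finset.sum_add_distrib,
    Finset.sum_const, Finset.sum_ite_eq' T j (fun _ => a - b),
    Finset.sum_ite_eq' T k (fun _ => a - b), if_pos hj, if_pos hk]
  ring

private lemma cube_expand {α : Type*} (s : Finset α) (f : α → ℝ) :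
    (∑ j ∈ s, f j) ^ 3 = ∑ j ∈ s, ∑ k ∈ s, ∑ l ∈ s, f j * f k * f l := by
  rw [pow_succ, pow_two, Finset.sum_mul_sum, Finset.sum_mul]
  refine Finset.sum_congr rfl fun j _ => ?_
  rw [Finset.sum_mul]
  exact Finset.sum_congr rfl fun k _ => by rw [Finset.mul_sum]

private def sigma' {n : ℕ} (i j : Fin n) (h : i ≠ j) : {e : Fin n × Fin n // e.1 < e.2} :=
  if hlt : i < j then ⟨(i, j), hlt⟩
  else ⟨(j, i), lt_of_le_of_ne (not_lt.mp hlt) (Ne.symm h)⟩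

theorem stmt8 {Ω : Type*} [MeasureSpace Ω] [IsProbabilityMeasure (ℙ : Measure Ω)]
    (n : ℕ) (p : ℝ) (hp : p ∈ Set.Icc (0:ℝ) 1)
    (A : Fin n → Fin n → Ω → ℝ)
    (hAsymm : ∀ i j, A i j = A j i) (hdiag : ∀ i ω, A i i ω = 0)
    (hmeas : ∀ i j, Measurable (A i j))
    (h01 : ∀ i j, i < j → ∀ ω, A i j ω = 0 ∨ A i j ω = 1)
    (hber : ∀ i j, i < j → ℙ {ω | A i j ω = 1} = ENNReal.ofReal p)
    (hindep : iIndepFun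
      (fun e : {e : Fin n × Fin n // e.1 < e.2} => A e.1.1 e.1.2) ℙ) :
    let d : Fin n → Ω → ℝ := fun i ω => ∑ k, if k ≠ i then A i k ω else 0
    (∫ ω, (∑ i, ∑ j, if i < j then A i j ω * ((d i ω)^2 + (d j ω)^2) else 0) ∂ℙ)
      = (n:ℝ) * ((n:ℝ)-1) * ((n:ℝ)-2) * ((n:ℝ)-3) * p^3
        + 3 * (n:ℝ) * ((n:ℝ)-1) * ((n:ℝ)-2) * p^2 + (n:ℝ) * ((n:ℝ)-1) * p := by
  intro d
  obtain ⟨hp0, hp1⟩ := hp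
  set B : {e : Fin n × Fin n // e.1 < e.2} → Ω → ℝ := fun e => A e.1.1 e.1.2 with hBdef
  -- basic value facts
  have hval : ∀ i j ω, A i j ω = 0 ∨ A i j ω = 1 := by
    intro i j ω
    rcases lt_trichotomy i j with h | h | h
    · exact h01 i j h ω
    · subst h; exact Or.inl (hdiag i ω)
    · rw [hAsymm i j]; exact h01 j i h ω
  have hIntOf : ∀ f : Ω → ℝ, Measurable f → (∀ ω, f ω = 0 ∨ f ω = 1) → Integrable f :=
    fun f hf hb => (integrable_const (1:ℝ)).mono' hf.aestronglyMeasurable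
      (Filter.Eventually.of_forall fun ω => by rcases hb ω with h | h <;> simp [h])
  have hInt1 : ∀ i j, Integrable (A i j) := fun i j => hIntOf _ (hmeas i j) (hval i j)
  have hmul01 : ∀ x y : ℝ, (x = 0 ∨ x = 1) → (y = 0 ∨ y = 1) → (x*y = 0 ∨ x*y = 1) := by
    rintro x y (rfl | rfl) (rfl | rfl) <;> simp
  have hInt3 : ∀ i j k l, Integrable (fun ω => A i j ω * A i k ω * A i l ω) :=
    fun i j k l => hIntOf _ (((hmeas i j).mul (hmeas i k)).mul (hmeas i l))
      (fun ω => hmul01 _ _ (hmul01 _ _ (hval i j ω) (hval i k ω)) (hval i l ω))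
  have hBmeas : ∀ e, Measurable (B e) := fun e => hmeas _ _
  have hBInt : ∀ e, Integrable (B e) := fun e => hInt1 _ _
  -- expectation of a single edge variable
  have hPmem : ∀ i j, i ≠ j → ℙ {ω | A i j ω = 1} = ENNReal.ofReal p := by
    intro i j hij
    rcases lt_or_gt_of_ne hij with h | h
    · exact hber i j h
    · have he : {ω | A i j ω = 1} = {ω | A j i ω = 1} := by rw [hAsymm]
      rw [he]; exact hber j i h
  have hE1 : ∀ i j, i ≠ j → ∫ ω, A i j ω ∂ℙ = p := by
    intro i j hij
    have hs : MeasurableSet {ω | A i j ω = 1} := (hmeas i j) (measurableSet_singleton 1)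
    have hfe : A i j = Set.indicator {ω | A i j ω = 1} (fun _ => (1:ℝ)) := by
      funext ω
      simp only [Set.indicator_apply, Set.mem_setOf_eq]
      by_cases h : A i j ω = 1
      · rw [if_pos h, h]
      · rw [if_neg h]
        rcases hval i j ω with h0 | h1
        · exact h0
        · exact absurd h1 h
    calc ∫ ω, A i j ω ∂ℙ = ∫ ω, Set.indicator {ω | A i j ω = 1} (fun _ => (1:ℝ)) ω ∂ℙ := by
          rw [← hfe]
      _ = (ℙ {ω | A i j ω = 1}).toReal • (1:ℝ) := integral_indicator_const (1:ℝ) hs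
      _ = p := by rw [hPmem i j hij, ENNReal.toReal_ofReal hp0, smul_eq_mul, mul_one]
  have hBE : ∀ e, ∫ ω, B e ω ∂ℙ = p := fun e => hE1 _ _ (ne_of_lt e.2)
  -- pair and triple product expectations
  have key2 : ∀ e f, e ≠ f → ∫ ω, B e ω * B f ω ∂ℙ = p ^ 2 := by
    intro e f hef
    have h := (hindep.indepFun hef).integral_mul_eq_mul_integral (hBInt e).aestronglyMeasurable (hBInt f).aestronglyMeasurable
    have h2 : ∫ ω, B e ω * B f ω ∂ℙ = ∫ ω, (B e * B f) ω ∂ℙ := rfl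
    rw [h2]
    show integral ℙ (B e * B f) = p ^ 2
    rw [h, hBE, hBE]; ring
  have key3 : ∀ e f g, e ≠ f → e ≠ g → f ≠ g →
      ∫ ω, B e ω * B f ω * B g ω ∂ℙ = p ^ 3 := by
    intro e f g hef heg hfg
    have hprod : (∏ x ∈ ({e, f} : Finset _), B x) = B e * B f := by
      rw [Finset.prod_pair hef]
    have hid : IndepFun (B e * B f) (B g) ℙ := by
      have h := hindep.indepFun_finsetProd_of_notMem hBmeas
        (s := {e, f}) (i := g) (by simp [Ne.symm heg, Ne.symm hfg])
      rwa [hprod] at h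
    have hint2 : Integrable (B e * B f) := hIntOf _ ((hBmeas e).mul (hBmeas f))
      (fun ω => hmul01 _ _ (hval _ _ ω) (hval _ _ ω))
    have h := hid.integral_mul_eq_mul_integral hint2.aestronglyMeasurable (hBInt g).aestronglyMeasurable
    have h2 : ∫ ω, B e ω * B f ω * B g ω ∂ℙ = ∫ ω, (B e * B f * B g) ω ∂ℙ := rfl
    rw [h2]
    show integral ℙ (B e * B f * B g) = p ^ 3
    rw [h]
    have h3 : integral ℙ (B e * B f) = ∫ ω, B e ω * B f ω ∂ℙ := rfl
    rw [h3, key2 e f hef, hBE]; ring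
  -- relating A to B through sigma'
  have hAσ : ∀ (i j : Fin n) (h : i ≠ j), A i j = B (sigma' i j h) := by
    intro i j h
    unfold sigma'
    split
    · rfl
    · exact hAsymm i j
  have hσinj : ∀ (i j k : Fin n) (hj : i ≠ j) (hk : i ≠ k), j ≠ k →
      sigma' i j hj ≠ sigma' i k hk := by
    intro i j k hj hk hjk heq
    unfold sigma' at heq
    split at heq <;> split at heq <;>
      simp only [Subtype.mk.injEq, Prod.mk.injEq] at heq <;>
      obtain ⟨h1, h2⟩ := heq
    · exact hjk h2
    · exact hk h1
    · exact hj h1.symm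
    · exact hjk h1
  -- triple expectations in terms of A
  have gval1 : ∀ i j : Fin n, j ≠ i → ∫ ω, A i j ω * A i j ω * A i j ω ∂ℙ = p := by
    intro i j hj
    have hfe : (fun ω => A i j ω * A i j ω * A i j ω) = fun ω => A i j ω :=
      funext fun ω => by rcases hval i j ω with h | h <;> simp [h]
    rw [hfe]
    exact hE1 i j (Ne.symm hj)
  have gval2a : ∀ i j l : Fin n, j ≠ i → l ≠ i → l ≠ j →
      ∫ ω, A i j ω * A i j ω * A i l ω ∂ℙ = p ^ 2 := by
    intro i j l hj hl hlj
    have hfe : (fun ω => A i j ω * A i j ω * A i l ω) = fun ω => A i j ω * A i l ω :=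
      funext fun ω => by rcases hval i j ω with h | h <;> simp [h]
    rw [hfe, hAσ i j (Ne.symm hj), hAσ i l (Ne.symm hl)]
    exact key2 _ _ (hσinj i j l (Ne.symm hj) (Ne.symm hl) (Ne.symm hlj))
  have gval2b : ∀ i j k : Fin n, j ≠ i → k ≠ i → k ≠ j →
      ∫ ω, A i j ω * A i k ω * A i j ω ∂ℙ = p ^ 2 := by
    intro i j k hj hk hkj
    have hfe : (fun ω => A i j ω * A i k ω * A i j ω) = fun ω => A i j ω * A i k ω :=
      funext fun ω => by
        rcases hval i j ω with h | h <;> rcases hval i k ω with h' | h' <;> simp [h, h']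
    rw [hfe, hAσ i j (Ne.symm hj), hAσ i k (Ne.symm hk)]
    exact key2 _ _ (hσinj i j k (Ne.symm hj) (Ne.symm hk) (Ne.symm hkj))
  have gval2c : ∀ i j k : Fin n, j ≠ i → k ≠ i → k ≠ j →
      ∫ ω, A i j ω * A i k ω * A i k ω ∂ℙ = p ^ 2 := by
    intro i j k hj hk hkj
    have hfe : (fun ω => A i j ω * A i k ω * A i k ω) = fun ω => A i j ω * A i k ω :=
      funext fun ω => by
        rcases hval i j ω with h | h <;> rcases hval i k ω with h' | h' <;> simp [h, h']
    rw [hfe, hAσ i j (Ne.symm hj), hAσ i k (Ne.symm hk)]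
    exact key2 _ _ (hσinj i j k (Ne.symm hj) (Ne.symm hk) (Ne.symm hkj))
  have gval3 : ∀ i j k l : Fin n, j ≠ i → k ≠ i → l ≠ i → j ≠ k → j ≠ l → k ≠ l →
      ∫ ω, A i j ω * A i k ω * A i l ω ∂ℙ = p ^ 3 := by
    intro i j k l hj hk hl hjk hjl hkl
    rw [hAσ i j (Ne.symm hj), hAσ i k (Ne.symm hk), hAσ i l (Ne.symm hl)]
    exact key3 _ _ _ (hσinj i j k (Ne.symm hj) (Ne.symm hk) hjk)
      (hσinj i j l (Ne.symm hj) (Ne.symm hl) hjl)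
      (hσinj i k l (Ne.symm hk) (Ne.symm hl) hkl)
  -- pointwise rewriting of the statistic as a sum of cubes
  set T : Fin n → Finset (Fin n) := fun i => Finset.univ.erase i with hTdef
  have hd : ∀ i ω, d i ω = ∑ j ∈ T i, A i j ω := by
    intro i ω
    show (∑ k, if k ≠ i then A i k ω else 0) = _
    rw [← Finset.sum_filter, Finset.filter_ne']
  have hAz : ∀ i ω, ∑ j, A i j ω = d i ω := by
    intro i ω
    rw [hd, ← Finset.add_sum_erase _ _ (Finset.mem_univ i), hdiag, zero_add]
  have hpoint : ∀ ω, (∑ i, ∑ j, if i < j then A i j ω * ((d i ω)^2 + (d j ω)^2) else 0)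
      = ∑ i, ∑ j ∈ T i, ∑ k ∈ T i, ∑ l ∈ T i, A i j ω * A i k ω * A i l ω := by
    intro ω
    have h1 : ∀ i j : Fin n, (if i < j then A i j ω * ((d i ω)^2 + (d j ω)^2) else 0)
        = (if i < j then A i j ω * (d i ω)^2 else 0)
          + (if i < j then A i j ω * (d j ω)^2 else 0) := by
      intro i j; split <;> ring
    calc (∑ i, ∑ j, if i < j then A i j ω * ((d i ω)^2 + (d j ω)^2) else 0)
        = (∑ i, ∑ j, (if i < j then A i j ω * (d i ω)^2 else 0))
          + (∑ i, ∑ j, (if i < j then A i j ω * (d j ω)^2 else 0)) := by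
          simp only [h1, Finset.sum_add_distrib]
      _ = (∑ i, ∑ j, (if i < j then A i j ω * (d i ω)^2 else 0))
          + (∑ i, ∑ j, (if j < i then A i j ω * (d i ω)^2 else 0)) := by
          congr 1
          rw [Finset.sum_comm]
          exact Finset.sum_congr rfl fun i _ => Finset.sum_congr rfl fun j _ => by
            rw [hAsymm i j]
      _ = ∑ i, ∑ j, A i j ω * (d i ω)^2 := by
          rw [← Finset.sum_add_distrib]
          refine Finset.sum_congr rfl fun i _ => ?_
          rw [← Finset.sum_add_distrib]
          refine Finset.sum_congr rfl fun j _ => ?_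
          rcases lt_trichotomy i j with h | h | h
          · rw [if_pos h, if_neg (asymm h), add_zero]
          · subst h; simp [hdiag]
          · rw [if_neg (asymm h), if_pos h, zero_add]
      _ = ∑ i, (d i ω) ^ 3 := by
          refine Finset.sum_congr rfl fun i _ => ?_
          rw [← Finset.sum_mul, hAz]
          ring
      _ = ∑ i, ∑ j ∈ T i, ∑ k ∈ T i, ∑ l ∈ T i, A i j ω * A i k ω * A i l ω := by
          refine Finset.sum_congr rfl fun i _ => ?_
          rw [hd, cube_expand]
  -- per-vertex expectation
  have hmcast : ∀ i : Fin n, ((T i).card : ℝ) = (n : ℝ) - 1 := by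
    intro i
    rw [hTdef]
    simp only [Finset.card_erase_of_mem (Finset.mem_univ i), Finset.card_univ,
      Fintype.card_fin]
    have : 1 ≤ n := i.pos
    push_cast [Nat.cast_sub this]
    ring
  have hInner : ∀ i : Fin n,
      (∫ ω, ∑ j ∈ T i, ∑ k ∈ T i, ∑ l ∈ T i, A i j ω * A i k ω * A i l ω ∂ℙ)
        = ((n:ℝ)-1) * p + 3 * ((n:ℝ)-1) * ((n:ℝ)-2) * p^2
          + ((n:ℝ)-1) * ((n:ℝ)-2) * ((n:ℝ)-3) * p^3 := by
    intro i
    rw [integral_finset_sum _ (fun j _ => integrable_finset_sum _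
      (fun k _ => integrable_finset_sum _ (fun l _ => hInt3 i j k l)))]
    have hstep : ∀ j ∈ T i,
        (∫ ω, ∑ k ∈ T i, ∑ l ∈ T i, A i j ω * A i k ω * A i l ω ∂ℙ)
          = (p + (((T i).card : ℝ) - 1) * p^2)
            + (((T i).card : ℝ) - 1) * (2 * p^2 + (((T i).card : ℝ) - 2) * p^3) := by
      intro j hj
      have hji : j ≠ i := (Finset.mem_erase.mp hj).1
      rw [integral_finset_sum _ (fun k _ => integrable_finset_sum _
        (fun l _ => hInt3 i j k l))]
      have hk' : ∀ k ∈ T i,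
          (∫ ω, ∑ l ∈ T i, A i j ω * A i k ω * A i l ω ∂ℙ)
            = if k = j then p + (((T i).card : ℝ) - 1) * p^2
              else 2 * p^2 + (((T i).card : ℝ) - 2) * p^3 := by
        intro k hk
        have hki : k ≠ i := (Finset.mem_erase.mp hk).1
        rw [integral_finset_sum _ (fun l _ => hInt3 i j k l)]
        by_cases hkj : k = j
        · subst hkj
          rw [if_pos rfl]
          have hc : ∀ l ∈ T i, (∫ ω, A i k ω * A i k ω * A i l ω ∂ℙ)
              = if l = k then p else p ^ 2 := by
            intro l hl
            have hli : l ≠ i := (Finset.mem_erase.mp hl).1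
            by_cases h : l = k
            · subst h; rw [if_pos rfl]; exact gval1 i l hli
            · rw [if_neg h]; exact gval2a i k l hki hli h
          rw [Finset.sum_congr rfl hc, sum_ite1 (T i) hk p (p^2)]
        · rw [if_neg hkj]
          have hc : ∀ l ∈ T i, (∫ ω, A i j ω * A i k ω * A i l ω ∂ℙ)
              = if l = j then p ^ 2 else if l = k then p ^ 2 else p ^ 3 := by
            intro l hl
            have hli : l ≠ i := (Finset.mem_erase.mp hl).1
            by_cases h1 : l = j
            · subst h1
              rw [if_pos rfl]
              exact gval2b i l k hli hki hkj
            · rw [if_neg h1]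
              by_cases h2 : l = k
              · subst h2
                rw [if_pos rfl]
                exact gval2c i j l hji hli (fun h => h1 h)
              · rw [if_neg h2]
                exact gval3 i j k l hji hki hli (fun h => hkj h.symm)
                  (fun h => h1 h.symm) (fun h => h2 h.symm)
          rw [Finset.sum_congr rfl hc,
            sum_ite2 (T i) hj hk (fun h => hkj h.symm) (p^2) (p^3)]
      rw [Finset.sum_congr rfl hk', sum_ite1 (T i) hj _ _]
    rw [Finset.sum_congr rfl hstep, Finset.sum_const, nsmul_eq_mul, hmcast i]
    ring
  -- put everything together
  calc (∫ ω, (∑ i, ∑ j, if i < j then A i j ω * ((d i ω)^2 + (d j ω)^2) else 0) ∂ℙ)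
      = ∫ ω, ∑ i, ∑ j ∈ T i, ∑ k ∈ T i, ∑ l ∈ T i, A i j ω * A i k ω * A i l ω ∂ℙ :=
        integral_congr_ae (Filter.Eventually.of_forall hpoint)
    _ = ∑ i : Fin n, ∫ ω, ∑ j ∈ T i, ∑ k ∈ T i, ∑ l ∈ T i, A i j ω * A i k ω * A i l ω ∂ℙ :=
        integral_finset_sum _ (fun i _ => integrable_finset_sum _
          (fun j _ => integrable_finset_sum _ (fun k _ => integrable_finset_sum _
            (fun l _ => hInt3 i j k l))))
    _ = ∑ _i : Fin n, (((n:ℝ)-1) * p + 3 * ((n:ℝ)-1) * ((n:ℝ)-2) * p^2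
          + ((n:ℝ)-1) * ((n:ℝ)-2) * ((n:ℝ)-3) * p^3) :=
        Finset.sum_congr rfl (fun i _ => hInner i)
    _ = (n:ℝ) * (((n:ℝ)-1) * p + 3 * ((n:ℝ)-1) * ((n:ℝ)-2) * p^2
          + ((n:ℝ)-1) * ((n:ℝ)-2) * ((n:ℝ)-3) * p^3) := by
        rw [Finset.sum_const, Finset.card_univ, Fintype.card_fin, nsmul_eq_mul]
    _ = (n:ℝ) * ((n:ℝ)-1) * ((n:ℝ)-2) * ((n:ℝ)-3) * p^3
        + 3 * (n:ℝ) * ((n:ℝ)-1) * ((n:ℝ)-2) * p^2 + (n:ℝ) * ((n:ℝ)-1) * p := by ring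
end

section
/- Let $X=\sum_{l=1}^m B_l$ with $B_l$ independent Bernoulli, $p\beta\le \mathbb{P}(B_l=1)\le p$, where $\beta\in(0,1]$ is constant and $mp=\omega(\log m)$ as $m\to\infty$. Let $\delta_m=(\log(mp))^{-2}$. Then for every integer $k\le \delta_m\, mp$, $\mathbb{P}(X=k)\le \exp\big(-mp\beta(1+o(1))\big)$; i.e., for every $\epsilon>0$ there is $m_0$ such that for all $m\ge m_0$ and all $k\le \delta_m mp$, $\mathbb{P}(X=k)\le \exp(-(1-\epsilon)mp\beta)$. -/
open MeasureTheory ProbabilityTheory Filter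

theorem stmt15 (Ω : ℕ → Type) (mΩ : ∀ m, MeasurableSpace (Ω m))
    (μ : ∀ m, Measure (Ω m)) (hprob : ∀ m, IsProbabilityMeasure (μ m))
    (B : ∀ m, Fin m → Ω m → ℝ) (q : ∀ m, Fin m → ℝ) (p : ℕ → ℝ) (β : ℝ)
    (hβ : 0 < β) (hβ1 : β ≤ 1)
    (hp : ∀ m, 0 < p m ∧ p m < 1)
    (hq : ∀ m l, p m * β ≤ q m l ∧ q m l ≤ p m)
    (hmeas : ∀ m l, Measurable (B m l))
    (h01 : ∀ m l ω, B m l ω = 0 ∨ B m l ω = 1)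
    (hber : ∀ m l, μ m {ω | B m l ω = 1} = ENNReal.ofReal (q m l))
    (hindep : ∀ m, iIndepFun (B m) (μ m))
    (hgrow : Tendsto (fun m : ℕ => (m * p m) / Real.log m) atTop atTop) :
    ∀ ε : ℝ, 0 < ε → ∃ m0 : ℕ, ∀ m, m0 ≤ m → ∀ k : ℕ,
      (k : ℝ) ≤ (Real.log (m * p m))⁻¹ ^ 2 * (m * p m) →
      μ m {ω | (∑ l, B m l ω) = (k : ℝ)}
        ≤ ENNReal.ofReal (Real.exp (-(1 - ε) * (m * p m) * β)) := by
  intro ε hε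
  have hεβ : 0 < ε * β := mul_pos hε hβ
  set M : ℝ := max (Real.exp (2 / (ε * β))) 3 with hM
  have hM3 : (3:ℝ) ≤ M := le_max_right _ _
  have hev : ∀ᶠ m : ℕ in atTop, M ≤ (m : ℝ) * p m := by
    filter_upwards [hgrow.eventually_ge_atTop M, eventually_ge_atTop 3] with m h1 h3
    have hm3 : (3:ℝ) ≤ m := by exact_mod_cast h3
    have hlog : (1:ℝ) ≤ Real.log m := by
      rw [Real.le_log_iff_exp_le (by linarith)]
      exact le_trans (Real.exp_one_lt_d9.le.trans (by norm_num)) hm3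
    have h2 : M * 1 ≤ ((m:ℝ) * p m / Real.log m) * Real.log m :=
      mul_le_mul h1 hlog zero_le_one (le_trans (by linarith) h1)
    rw [mul_one, div_mul_cancel₀ _ (by linarith : Real.log m ≠ 0)] at h2
    exact h2
  obtain ⟨m0, hm0⟩ := eventually_atTop.1 hev
  refine ⟨m0, fun m hm k hk => ?_⟩
  have hNM : M ≤ (m:ℝ) * p m := hm0 m hm
  set N : ℝ := (m:ℝ) * p m with hNdef
  have hN3 : (3:ℝ) ≤ N := le_trans hM3 hNM
  have hN0 : (0:ℝ) < N := by linarith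
  have hlogN1 : (1:ℝ) ≤ Real.log N := by
    rw [Real.le_log_iff_exp_le hN0]
    exact le_trans (Real.exp_one_lt_d9.le.trans (by norm_num)) hN3
  have hlogN2 : 2 / (ε * β) ≤ Real.log N := by
    rw [← Real.log_exp (2 / (ε * β))]
    exact Real.log_le_log (Real.exp_pos _) (le_trans (le_max_left _ _) hNM)
  have hN2ε : 2 / ε ≤ N := by
    have h1 : 2 / ε ≤ 2 / (ε * β) := by
      apply div_le_div_of_nonneg_left (by norm_num) hεβ
      nlinarith
    have h2 : 2 / (ε * β) ≤ Real.exp (2 / (ε * β)) := by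
      linarith [Real.add_one_le_exp (2 / (ε * β))]
    exact le_trans (le_trans h1 h2) (le_trans (le_max_left _ _) hNM)
  set t : ℝ := - Real.log N with ht
  have ht0 : t ≤ 0 := by rw [ht]; linarith
  have het1 : Real.exp t ≤ 1 := by
    rw [← Real.exp_zero]; exact Real.exp_le_exp.2 ht0
  have hexpt : Real.exp t = N⁻¹ := by
    rw [ht, Real.exp_neg, Real.exp_log hN0]
  have := hprob m
  have hq0 : ∀ l, 0 ≤ q m l := fun l =>
    le_trans (mul_nonneg (hp m).1.le hβ.le) (hq m l).1
  have hq1 : ∀ l, q m l ≤ 1 := fun l => le_trans (hq m l).2 (hp m).2.le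
  have hAmeas : ∀ l, MeasurableSet {ω | B m l ω = 1} := fun l =>
    (hmeas m l) (measurableSet_singleton 1)
  have hBind : ∀ l, B m l = Set.indicator {ω | B m l ω = 1} (fun _ => (1:ℝ)) := by
    intro l; funext ω
    rcases h01 m l ω with h | h <;> simp [Set.indicator_apply, h]
  have hBint : ∀ l, Integrable (B m l) (μ m) := by
    intro l; rw [hBind l]
    exact (integrable_const 1).indicator (hAmeas l)
  have hEB : ∀ l, ∫ ω, B m l ω ∂ μ m = q m l := by
    intro l
    rw [hBind l, MeasureTheory.integral_indicator_const _ (hAmeas l), measureReal_def, hber m l,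
      ENNReal.toReal_ofReal (hq0 l)]
    simp
  have hexpB : ∀ l, (fun ω => Real.exp (t * B m l ω))
      = fun ω => 1 + (Real.exp t - 1) * B m l ω := by
    intro l; funext ω
    rcases h01 m l ω with h | h
    · simp [h]
    · rw [h, mul_one, mul_one]; ring
  have hexpint : ∀ l, Integrable (fun ω => Real.exp (t * B m l ω)) (μ m) := by
    intro l; rw [hexpB l]
    exact (integrable_const 1).add ((hBint l).const_mul _)
  have hmgfB : ∀ l, mgf (B m l) (μ m) t = 1 + (Real.exp t - 1) * q m l := by
    intro l
    rw [mgf, hexpB l, integral_add (integrable_const 1) ((hBint l).const_mul _),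
      integral_const_mul, hEB l]
    simp
  have hsum_mgf : mgf (∑ l, B m l) (μ m) t = ∏ l, mgf (B m l) (μ m) t :=
    (hindep m).mgf_sum (hmeas m) Finset.univ
  have hintX : Integrable (fun ω => Real.exp (t * (∑ l, B m l) ω)) (μ m) :=
    (hindep m).integrable_exp_mul_sum (hmeas m) (fun l _ => hexpint l)
  have hchern := measure_le_le_exp_mul_mgf (μ := μ m) (X := ∑ l, B m l) (t := t)
    (k : ℝ) ht0 hintX
  have hprod : ∏ l, mgf (B m l) (μ m) t ≤ Real.exp (-(1 - Real.exp t) * N * β) := by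
    calc ∏ l, mgf (B m l) (μ m) t
        ≤ ∏ _l : Fin m, Real.exp (-(1 - Real.exp t) * (p m * β)) := by
          apply Finset.prod_le_prod
          · intro l _; rw [hmgfB l]
            nlinarith [hq1 l, hq0 l, Real.exp_pos t]
          · intro l _
            rw [hmgfB l]
            have h1 : 1 + (Real.exp t - 1) * q m l
                ≤ Real.exp ((Real.exp t - 1) * q m l) := by
              linarith [Real.add_one_le_exp ((Real.exp t - 1) * q m l)]
            refine h1.trans (Real.exp_le_exp.2 ?_)
            nlinarith [(hq m l).1, het1]
      _ = Real.exp (-(1 - Real.exp t) * N * β) := by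
          rw [Finset.prod_const, Finset.card_univ, Fintype.card_fin,
            ← Real.exp_nat_mul]
          congr 1
          rw [hNdef]; ring
  have hεN : 2 ≤ ε * N := by
    have := (div_le_iff₀ hε).mp hN2ε
    linarith
  have hβ2 : β ≤ ε * β / 2 * N := by nlinarith
  have hsk : Real.log N * (k:ℝ) ≤ ε * β / 2 * N := by
    have hs0 : (0:ℝ) < Real.log N := by linarith
    have h1 : Real.log N * (k:ℝ) ≤ Real.log N * ((Real.log N)⁻¹ ^ 2 * N) :=
      mul_le_mul_of_nonneg_left hk hs0.le
    have h2 : Real.log N * ((Real.log N)⁻¹ ^ 2 * N) = (Real.log N)⁻¹ * N := by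
      field_simp
    have h3 : (Real.log N)⁻¹ ≤ ε * β / 2 := by
      have h4 : (Real.log N)⁻¹ ≤ (2 / (ε * β))⁻¹ :=
        inv_anti₀ (by positivity) hlogN2
      rwa [inv_div] at h4
    calc Real.log N * (k:ℝ) ≤ (Real.log N)⁻¹ * N := by rw [← h2]; exact h1
      _ ≤ ε * β / 2 * N := mul_le_mul_of_nonneg_right h3 hN0.le
  have hfinal : Real.exp (-t * k) * mgf (∑ l, B m l) (μ m) t
      ≤ Real.exp (-(1 - ε) * N * β) := by
    rw [hsum_mgf]
    calc Real.exp (-t * k) * ∏ l, mgf (B m l) (μ m) t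
        ≤ Real.exp (-t * k) * Real.exp (-(1 - Real.exp t) * N * β) :=
          mul_le_mul_of_nonneg_left hprod (Real.exp_pos _).le
      _ = Real.exp (-t * k + -(1 - Real.exp t) * N * β) := by
          rw [Real.exp_add]
      _ ≤ Real.exp (-(1 - ε) * N * β) := by
          apply Real.exp_le_exp.2
          rw [hexpt, ht, neg_neg]
          have hNN : (1 - N⁻¹) * N = N - 1 := by
            rw [sub_mul, one_mul, inv_mul_cancel₀ hN0.ne']
          have e1 : -(1 - N⁻¹) * N * β = -(N - 1) * β := by rw [neg_mul, hNN]
          rw [e1]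
          linarith [hsk, hβ2]
  have hsub : {ω | (∑ l, B m l ω) = (k:ℝ)} ⊆ {ω | (∑ l, B m l) ω ≤ (k:ℝ)} := by
    intro ω hω
    simp only [Set.mem_setOf_eq, Finset.sum_apply] at *
    exact le_of_eq hω
  calc μ m {ω | (∑ l, B m l ω) = (k:ℝ)} ≤ μ m {ω | (∑ l, B m l) ω ≤ (k:ℝ)} :=
        measure_mono hsub
    _ ≤ ENNReal.ofReal (Real.exp (-(1 - ε) * N * β)) := by
        rw [ENNReal.le_ofReal_iff_toReal_le (measure_ne_top _ _) (Real.exp_pos _).le]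
        exact hchern.trans hfinal
end

section
/- Let $X=\sum_{l=1}^m B_l$ with $B_l$ independent Bernoulli, $p\beta\le \mathbb{P}(B_l=1)\le p$, $\beta\in(0,1]$, and suppose $mp=\omega(\log m)$. Let $M>e^2/(1-p\beta)$ be a constant. Then for every integer $k\ge M m p$, $\mathbb{P}(X=k)\le \exp(-mp\beta(1+o(1)))$; i.e., for every $\epsilon>0$ there is $m_0$ such that for all $m\ge m_0$ and all $k\ge Mmp$, $\mathbb{P}(X=k)\le \exp(-(1-\epsilon)mp\beta)$. -/
open MeasureTheory ProbabilityTheory Filter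

private theorem key16 (m k : ℕ) (p β M ε : ℝ) (hp0 : 0 < p) (hβ : 0 < β) (hβ1 : β ≤ 1)
    (hM2 : Real.exp 2 ≤ M) (hm1 : (1:ℝ) ≤ (m:ℝ)) (hε : 0 < ε)
    (hk : M * ((m:ℝ) * p) ≤ (k:ℝ)) :
    (m.choose k : ℝ) * p ^ k ≤ Real.exp (-(1 - ε) * ((m:ℝ) * p) * β) := by
  have he2 : (0:ℝ) < Real.exp 2 := Real.exp_pos 2
  have hM0 : 0 < M := lt_of_lt_of_le he2 hM2
  have ht : 0 < (m:ℝ) * p := by positivity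
  have hk0 : (0:ℝ) < k := lt_of_lt_of_le (by positivity) hk
  have hkf : (0:ℝ) < (k.factorial : ℝ) := by exact_mod_cast k.factorial_pos
  have h1 : (m.choose k : ℝ) ≤ (m:ℝ) ^ k / (k.factorial : ℝ) := Nat.choose_le_pow_div k m
  have h2 : (k:ℝ) ^ k / (k.factorial : ℝ) ≤ Real.exp k :=
    Real.pow_div_factorial_le_exp _ (le_of_lt hk0) k
  have hle : (m:ℝ) * p ≤ (k:ℝ) / Real.exp 2 := by
    rw [le_div_iff₀ he2]
    calc (m:ℝ) * p * Real.exp 2 = Real.exp 2 * ((m:ℝ) * p) := by ring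
      _ ≤ M * ((m:ℝ) * p) := by gcongr
      _ ≤ k := hk
  have step1 : (m.choose k : ℝ) * p ^ k ≤ ((m:ℝ) * p) ^ k / (k.factorial : ℝ) := by
    calc (m.choose k : ℝ) * p ^ k ≤ ((m:ℝ) ^ k / (k.factorial : ℝ)) * p ^ k := by
          gcongr
      _ = ((m:ℝ) * p) ^ k / (k.factorial : ℝ) := by rw [mul_pow]; ring
  have step2 : ((m:ℝ) * p) ^ k / (k.factorial : ℝ)
      ≤ ((k:ℝ) / Real.exp 2) ^ k / (k.factorial : ℝ) := by gcongr
  have step3 : ((k:ℝ) / Real.exp 2) ^ k / (k.factorial : ℝ) ≤ Real.exp (-(k:ℝ)) := by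
    have : ((k:ℝ) / Real.exp 2) ^ k / (k.factorial : ℝ)
        = ((k:ℝ) ^ k / (k.factorial : ℝ)) / Real.exp 2 ^ k := by
      rw [div_pow]; ring
    rw [this]
    calc ((k:ℝ) ^ k / (k.factorial : ℝ)) / Real.exp 2 ^ k
        ≤ Real.exp k / Real.exp 2 ^ k := by gcongr
      _ = Real.exp (-(k:ℝ)) := by
          rw [← Real.exp_nat_mul, ← Real.exp_sub]
          congr 1
          ring
  have step4 : Real.exp (-(k:ℝ)) ≤ Real.exp (-(1 - ε) * ((m:ℝ) * p) * β) := by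
    apply Real.exp_le_exp.mpr
    have htβ : 0 < ((m:ℝ) * p) * β := mul_pos ht hβ
    have h3 : (1 - ε) * (((m:ℝ) * p) * β) ≤ ((m:ℝ) * p) * β := by nlinarith
    have h4 : ((m:ℝ) * p) * β ≤ (m:ℝ) * p := by nlinarith
    have h5 : (m:ℝ) * p ≤ k := by nlinarith [Real.one_le_exp (by norm_num : (0:ℝ) ≤ 2)]
    nlinarith
  linarith

theorem stmt16 (Ω : ℕ → Type) (mΩ : ∀ m, MeasurableSpace (Ω m))
    (μ : ∀ m, Measure (Ω m)) (hprob : ∀ m, IsProbabilityMeasure (μ m))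
    (B : ∀ m, Fin m → Ω m → ℝ) (q : ∀ m, Fin m → ℝ) (p : ℕ → ℝ) (β M : ℝ)
    (hβ : 0 < β) (hβ1 : β ≤ 1)
    (hp : ∀ m, 0 < p m ∧ p m < 1)
    (hM : ∀ m, Real.exp 2 / (1 - p m * β) < M)
    (hq : ∀ m l, p m * β ≤ q m l ∧ q m l ≤ p m)
    (hmeas : ∀ m l, Measurable (B m l))
    (h01 : ∀ m l ω, B m l ω = 0 ∨ B m l ω = 1)
    (hber : ∀ m l, μ m {ω | B m l ω = 1} = ENNReal.ofReal (q m l))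
    (hindep : ∀ m, iIndepFun (B m) (μ m))
    (hgrow : Tendsto (fun m : ℕ => (m * p m) / Real.log m) atTop atTop) :
    ∀ ε : ℝ, 0 < ε → ∃ m0 : ℕ, ∀ m, m0 ≤ m → ∀ k : ℕ,
      M * (m * p m) ≤ (k : ℝ) →
      μ m {ω | (∑ l, B m l ω) = (k : ℝ)}
        ≤ ENNReal.ofReal (Real.exp (-(1 - ε) * (m * p m) * β)) := by
  classical
  intro ε hε
  refine ⟨1, fun m hm k hk => ?_⟩
  obtain ⟨hp0, hp1⟩ := hp m
  have hm1 : (1:ℝ) ≤ (m:ℝ) := by exact_mod_cast hm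
  have hpβ : p m * β < 1 := by nlinarith
  have hM2 : Real.exp 2 ≤ M := by
    have h1 : 0 < 1 - p m * β := by linarith
    have h2 := (div_lt_iff₀ h1).mp (hM m)
    nlinarith [Real.exp_pos 2, mul_pos hp0 hβ]
  -- union bound
  have hsub : {ω | (∑ l, B m l ω) = (k : ℝ)}
      ⊆ ⋃ S ∈ Finset.powersetCard k (Finset.univ : Finset (Fin m)),
          ⋂ l ∈ S, B m l ⁻¹' {1} := by
    intro ω hω
    simp only [Set.mem_setOf_eq] at hω
    set S := Finset.univ.filter (fun l => B m l ω = 1) with hS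
    have hval : ∀ l, B m l ω = if B m l ω = 1 then (1:ℝ) else 0 := fun l => by
      rcases h01 m l ω with h | h <;> simp [h]
    have hcard : (S.card : ℝ) = (k : ℝ) := by
      calc (S.card : ℝ) = ∑ l ∈ S, (1:ℝ) := by simp
        _ = ∑ l, if B m l ω = 1 then (1:ℝ) else 0 := by rw [hS, Finset.sum_filter]
        _ = ∑ l, B m l ω := Finset.sum_congr rfl (fun l _ => (hval l).symm)
        _ = (k : ℝ) := hω
    have hcard' : S.card = k := by exact_mod_cast hcard
    have hmem : S ∈ Finset.powersetCard k (Finset.univ : Finset (Fin m)) :=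
      Finset.mem_powersetCard.mpr ⟨Finset.subset_univ _, hcard'⟩
    refine Set.mem_biUnion hmem (Set.mem_biInter fun l hl => ?_)
    have := (Finset.mem_filter.mp hl).2
    simpa using this
  have hstep : μ m {ω | (∑ l, B m l ω) = (k : ℝ)}
      ≤ ∑ S ∈ Finset.powersetCard k (Finset.univ : Finset (Fin m)),
          μ m (⋂ l ∈ S, B m l ⁻¹' {1}) :=
    (measure_mono hsub).trans (measure_biUnion_finset_le _ _)
  have hterm : ∀ S ∈ Finset.powersetCard k (Finset.univ : Finset (Fin m)),
      μ m (⋂ l ∈ S, B m l ⁻¹' {1}) ≤ ENNReal.ofReal (p m) ^ k := by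
    intro S hSmem
    have hScard := (Finset.mem_powersetCard.mp hSmem).2
    have hind := (hindep m).measure_inter_preimage_eq_mul S
      (sets := fun _ => ({1} : Set ℝ)) (fun i _ => measurableSet_singleton 1)
    rw [hind]
    calc ∏ l ∈ S, μ m (B m l ⁻¹' {1})
        ≤ ∏ l ∈ S, ENNReal.ofReal (p m) := by
          refine Finset.prod_le_prod' fun l _ => ?_
          have : B m l ⁻¹' {1} = {ω | B m l ω = 1} := by
            ext ω; simp [Set.mem_preimage]
          rw [this, hber m l]
          exact ENNReal.ofReal_le_ofReal (hq m l).2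
      _ = ENNReal.ofReal (p m) ^ k := by
          rw [Finset.prod_const, hScard]
  have hbound : μ m {ω | (∑ l, B m l ω) = (k : ℝ)}
      ≤ ENNReal.ofReal ((m.choose k : ℝ) * p m ^ k) := by
    calc μ m {ω | (∑ l, B m l ω) = (k : ℝ)}
        ≤ ∑ S ∈ Finset.powersetCard k (Finset.univ : Finset (Fin m)),
            μ m (⋂ l ∈ S, B m l ⁻¹' {1}) := hstep
      _ ≤ ∑ _S ∈ Finset.powersetCard k (Finset.univ : Finset (Fin m)),
            ENNReal.ofReal (p m) ^ k := Finset.sum_le_sum hterm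
      _ = (m.choose k : ENNReal) * ENNReal.ofReal (p m) ^ k := by
          rw [Finset.sum_const, Finset.card_powersetCard, Finset.card_univ,
            Fintype.card_fin, nsmul_eq_mul]
      _ = ENNReal.ofReal ((m.choose k : ℝ) * p m ^ k) := by
          rw [ENNReal.ofReal_mul (by positivity), ← ENNReal.ofReal_pow hp0.le,
            ENNReal.ofReal_natCast]
  exact hbound.trans (ENNReal.ofReal_le_ofReal
    (key16 m k (p m) β M ε hp0 hβ hβ1 hM2 hm1 hε hk))
end
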